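/- arXiv:1002.3215 — 3 statements merged into one kernel-verified Lean document; each statement's English description precedes it below -/
import Mathlib

section
/- For N > 0 define A(N) = (12/N)(e^{N/2} ∫₀^1 e^{−Nt²/2} dt − 1) − (12/N)(e^{N/2} − 1) · (∫₀^1 ∫₀^s e^{N(s²−t²)/2} dt ds)/(∫₀^1 e^{Ns²/2} ds). Then lim_{N→0⁺} A(N) = 1. -/
open MeasureTheory Filter Topology Real

lemma slope_exp (c : ℝ) :
    Tendsto (fun N : ℝ => (Real.exp (c * N) - 1) / N) (𝓝[>] 0) (𝓝 c) := by
  have h : HasDerivAt (fun N : ℝ => Real.exp (c * N)) c 0 := by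
    simpa using ((hasDerivAt_id (0:ℝ)).const_mul c).exp
  have h1 := hasDerivAt_iff_tendsto_slope.mp h
  have h2 : Tendsto (slope (fun N : ℝ => Real.exp (c * N)) 0) (𝓝[>] 0) (𝓝 c) :=
    h1.mono_left (nhdsWithin_mono _ (fun x hx => ne_of_gt hx))
  refine h2.congr (fun N => ?_)
  simp [slope_def_field]

lemma tendsto_I :
    Tendsto (fun N : ℝ => ((∫ t in (0:ℝ)..1, Real.exp (-N * t^2 / 2)) - 1) / N)
      (𝓝[>] 0) (𝓝 (-1/6)) := by
  have key : Tendsto (fun N : ℝ => ∫ t in Set.Ioc (0:ℝ) 1, (Real.exp (-N * t^2 / 2) - 1) / N)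
      (𝓝[>] 0) (𝓝 (∫ t in Set.Ioc (0:ℝ) 1, (-(t^2) / 2))) := by
    apply MeasureTheory.tendsto_integral_filter_of_dominated_convergence
        (bound := fun _ => (1:ℝ)/2)
    · exact Eventually.of_forall fun N => (Continuous.aestronglyMeasurable (by fun_prop))
    · filter_upwards [self_mem_nhdsWithin] with N (hN : 0 < N)
      refine (ae_restrict_iff' measurableSet_Ioc).2 (Eventually.of_forall fun t ht => ?_)
      have h1 : -N * t^2 / 2 ≤ 0 := by nlinarith [sq_nonneg t]
      have h2 : Real.exp (-N * t^2 / 2) ≤ 1 := Real.exp_le_one_iff.mpr h1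
      have h3 : -N * t^2 / 2 + 1 ≤ Real.exp (-N * t^2 / 2) := Real.add_one_le_exp _
      have ht1 : t ≤ 1 := ht.2
      have ht0 : 0 < t := ht.1
      have ht2 : t^2 ≤ 1 := by nlinarith
      rw [Real.norm_eq_abs, abs_div, abs_of_pos hN, abs_of_nonpos (by linarith)]
      rw [div_le_iff₀ hN]
      nlinarith [mul_nonneg hN.le (by nlinarith : (0:ℝ) ≤ 1 - t^2)]
    · exact integrable_const _
    · refine Eventually.of_forall fun t => ?_
      have h := slope_exp (-(t^2)/2)
      have e : ∀ N : ℝ, (-(t^2)/2) * N = -N * t^2 / 2 := fun N => by ring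
      simpa only [e] using h
  have hval : (∫ t in Set.Ioc (0:ℝ) 1, (-(t^2) / 2)) = -1/6 := by
    rw [← intervalIntegral.integral_of_le (zero_le_one)]
    norm_num [intervalIntegral.integral_div, intervalIntegral.integral_neg, integral_pow]
  rw [hval] at key
  refine key.congr' ?_
  filter_upwards [self_mem_nhdsWithin] with N (hN : 0 < N)
  have hInt : IntervalIntegrable (fun t : ℝ => Real.exp (-N * t^2 / 2)) volume 0 1 :=
    (Continuous.intervalIntegrable (by fun_prop) _ _)
  rw [← intervalIntegral.integral_of_le (zero_le_one),
    intervalIntegral.integral_div, intervalIntegral.integral_sub hInt intervalIntegrable_const]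
  simp

lemma tendsto_S :
    Tendsto (fun N : ℝ => ∫ s in (0:ℝ)..1, Real.exp (N * s^2 / 2)) (𝓝 0) (𝓝 1) := by
  have hc : Continuous (fun N : ℝ => ∫ s in (0:ℝ)..1, Real.exp (N * s^2 / 2)) := by
    apply intervalIntegral.continuous_parametric_intervalIntegral_of_continuous'
      (μ := volume) (f := fun (N : ℝ) (s : ℝ) => Real.exp (N * s^2 / 2))
    fun_prop
  have := hc.tendsto 0
  simpa using this

open intervalIntegral in
lemma tendsto_D :
    Tendsto (fun N : ℝ => ∫ s in (0:ℝ)..1, ∫ t in (0:ℝ)..s, Real.exp (N * (s^2 - t^2) / 2))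
      (𝓝 0) (𝓝 (1/2)) := by
  have hc : Continuous
      (fun N : ℝ => ∫ s in (0:ℝ)..1, ∫ t in (0:ℝ)..s, Real.exp (N * (s^2 - t^2) / 2)) := by
    apply intervalIntegral.continuous_parametric_intervalIntegral_of_continuous'
      (μ := volume)
      (f := fun (N : ℝ) (s : ℝ) => ∫ t in (0:ℝ)..s, Real.exp (N * (s^2 - t^2) / 2))
    apply intervalIntegral.continuous_parametric_intervalIntegral_of_continuous
      (μ := volume)
      (f := fun (p : ℝ × ℝ) (t : ℝ) => Real.exp (p.1 * (p.2^2 - t^2) / 2))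
      (s := fun p : ℝ × ℝ => p.2)
    · fun_prop
    · exact continuous_snd
  have h0 := hc.tendsto 0
  have : (∫ s in (0:ℝ)..1, ∫ t in (0:ℝ)..s, Real.exp ((0:ℝ) * (s^2 - t^2) / 2)) = 1/2 := by
    simp only [zero_mul, zero_div, Real.exp_zero, intervalIntegral.integral_const, smul_eq_mul,
      mul_one, sub_zero]
    rw [integral_id]
    norm_num
  rwa [this] at h0

lemma tendsto_u :
    Tendsto (fun N : ℝ =>
      (Real.exp (N / 2) * (∫ t in (0:ℝ)..1, Real.exp (-N * t^2 / 2)) - 1) / N)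
      (𝓝[>] 0) (𝓝 (1/3)) := by
  have h1 : Tendsto (fun N : ℝ => Real.exp (N / 2)) (𝓝[>] 0) (𝓝 1) := by
    have : Tendsto (fun N : ℝ => Real.exp (N / 2)) (𝓝 0) (𝓝 1) := by
      have := (Real.continuous_exp.comp (continuous_id.div_const 2)).tendsto 0
      simpa [Function.comp_def] using this
    exact this.mono_left nhdsWithin_le_nhds
  have h3 : Tendsto (fun N : ℝ => (Real.exp (N / 2) - 1) / N) (𝓝[>] 0) (𝓝 (1/2)) := by
    have h := slope_exp (1/2)
    have e : ∀ N : ℝ, (1/2 : ℝ) * N = N / 2 := fun N => by ring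
    simpa only [e] using h
  have hsum := (h1.mul tendsto_I).add h3
  rw [show (1:ℝ) * (-1/6) + 1/2 = 1/3 by norm_num] at hsum
  refine hsum.congr (fun N => ?_)
  ring

/-- The modified Poiseuille coefficient `A(N)` tends to the classical value `1` as `N → 0⁺`. -/
theorem stmt6 :
    Tendsto
      (fun N : ℝ =>
        (12 / N) * (Real.exp (N / 2) * (∫ t in (0:ℝ)..1, Real.exp (-N * t^2 / 2)) - 1)
          - (12 / N) * (Real.exp (N / 2) - 1)
            * (∫ s in (0:ℝ)..1, ∫ t in (0:ℝ)..s, Real.exp (N * (s^2 - t^2) / 2))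
            / (∫ s in (0:ℝ)..1, Real.exp (N * s^2 / 2)))
      (𝓝[>] (0:ℝ)) (𝓝 1) := by
  have hu := tendsto_u
  have hv : Tendsto (fun N : ℝ => (Real.exp (N / 2) - 1) / N) (𝓝[>] 0) (𝓝 (1/2)) := by
    have h := slope_exp (1/2)
    have e : ∀ N : ℝ, (1/2 : ℝ) * N = N / 2 := fun N => by ring
    simpa only [e] using h
  have hD : Tendsto (fun N : ℝ => ∫ s in (0:ℝ)..1, ∫ t in (0:ℝ)..s,
      Real.exp (N * (s^2 - t^2) / 2)) (𝓝[>] 0) (𝓝 (1/2)) :=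
    tendsto_D.mono_left nhdsWithin_le_nhds
  have hS : Tendsto (fun N : ℝ => ∫ s in (0:ℝ)..1, Real.exp (N * s^2 / 2))
      (𝓝[>] 0) (𝓝 1) :=
    tendsto_S.mono_left nhdsWithin_le_nhds
  have hmain := ((tendsto_const_nhds (x := (12:ℝ))).mul hu).sub
    (((((tendsto_const_nhds (x := (12:ℝ))).mul hv).mul hD).div hS (by norm_num)))
  rw [show (12:ℝ) * (1/3) - 12 * (1/2) * (1/2) / 1 = 1 by norm_num] at hmain
  refine hmain.congr (fun N => ?_)
  simp only [Pi.div_apply]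
  ring
end

section
/- For every N > 0, the coefficient B(N) = (1/N)(e^{N/2} − 1)/(∫₀^1 e^{Ns²/2} ds) satisfies B(N) > 1/2. -/
open MeasureTheory Real

/-- For every `N > 0`, the Couette coefficient
`B(N) = (1/N)(e^{N/2} − 1)/∫₀¹ e^{Ns²/2} ds` satisfies `B(N) > 1/2`:
roughness accelerates the Couette flow. -/
theorem stmt8 (N : ℝ) (hN : 0 < N) :
    (1 / N) * (Real.exp (N / 2) - 1) / (∫ s in (0:ℝ)..1, Real.exp (N * s^2 / 2)) > 1 / 2 := by
  have hcont : ContinuousOn (fun s : ℝ => Real.exp (N * s ^ 2 / 2)) (Set.Icc 0 1) :=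
    (Real.continuous_exp.comp (by continuity)).continuousOn
  have hIpos : 0 < ∫ s in (0:ℝ)..1, Real.exp (N * s^2 / 2) := by
    apply intervalIntegral.integral_pos one_pos hcont
    · intro x _; positivity
    · exact ⟨0, by norm_num, Real.exp_pos _⟩
  -- linear integral
  have hlin : (∫ s in (0:ℝ)..1, Real.exp (N * s / 2)) = (2 / N) * (Real.exp (N / 2) - 1) := by
    have : ∀ x ∈ Set.uIcc (0:ℝ) 1, HasDerivAt (fun s => (2 / N) * Real.exp (N * s / 2))
        (Real.exp (N * x / 2)) x := by
      intro x _
      have h : HasDerivAt (fun s : ℝ => N * s / 2) (N / 2) x := by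
        simpa using ((hasDerivAt_id x).const_mul N).div_const 2
      have := (h.exp).const_mul (2 / N)
      refine this.congr_deriv ?_
      rw [mul_comm (Real.exp _), ← mul_assoc, div_mul_div_comm, mul_comm 2 N, div_self (by positivity), one_mul]
    rw [intervalIntegral.integral_eq_sub_of_hasDerivAt this
      ((Real.continuous_exp.comp (by continuity)).intervalIntegrable 0 1)]
    simp [mul_sub]
  have hlt : (∫ s in (0:ℝ)..1, Real.exp (N * s^2 / 2)) < ∫ s in (0:ℝ)..1, Real.exp (N * s / 2) := by
    apply intervalIntegral.integral_lt_integral_of_continuousOn_of_le_of_exists_lt one_pos hcont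
      ((Real.continuous_exp.comp (by continuity)).continuousOn)
    · intro x hx
      apply Real.exp_le_exp.2
      have h1 : x ^ 2 ≤ x := by nlinarith [hx.1, hx.2]
      nlinarith
    · refine ⟨1/2, by norm_num, ?_⟩
      apply Real.exp_lt_exp.2
      nlinarith
  rw [gt_iff_lt, div_lt_div_iff₀ (by norm_num) hIpos, one_mul]
  calc (∫ s in (0:ℝ)..1, Real.exp (N * s^2 / 2))
      < (2 / N) * (Real.exp (N / 2) - 1) := by rw [← hlin]; exact hlt
    _ = 1 / N * (Real.exp (N / 2) - 1) * 2 := by ring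
end

section
/- Let p⁰(x), u⁰(x,Z) satisfy, for a.e. x ∈ ω and N(x) > 0: N(x) Z ∂_Z u⁰ − ∂²_{ZZ} u⁰ + h₁(x)² ∇_x p⁰(x) = 0 on Z ∈ (0,1), with u⁰(x,0) = U_b, u⁰(x,1) = 0, and suppose div_x(h₁ ∫₀^1 u⁰ dZ) = 0. Then p⁰ satisfies the modified Reynolds equation div_x((h₁³/12) A(N) ∇_x p⁰) = div_x(h₁ B(N) U_b), where A(N) = (12/N)(e^{N/2} ∫₀^1 e^{−Nt²/2} dt − 1) − (12/N)(e^{N/2} − 1)(∫₀^1∫₀^s e^{N(s²−t²)/2} dt ds)/(∫₀^1 e^{Ns²/2} ds) and B(N) = (1/N)(e^{N/2} − 1)/(∫₀^1 e^{Ns²/2} ds). -/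
open MeasureTheory Real

/-- Divergence of a vector field on Euclidean space. -/
noncomputable def ediv {m : ℕ} (F : EuclideanSpace ℝ (Fin m) → EuclideanSpace ℝ (Fin m))
    (x : EuclideanSpace ℝ (Fin m)) : ℝ :=
  ∑ i, fderiv ℝ F x (EuclideanSpace.single i 1) i

/-- The modified Poiseuille coefficient `A(N)`. -/
noncomputable def Acoef (N : ℝ) : ℝ :=
  (12 / N) * (Real.exp (N / 2) * (∫ t in (0:ℝ)..1, Real.exp (-N * t^2 / 2)) - 1)
    - (12 / N) * (Real.exp (N / 2) - 1)
      * (∫ s in (0:ℝ)..1, ∫ t in (0:ℝ)..s, Real.exp (N * (s^2 - t^2) / 2))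
      / (∫ s in (0:ℝ)..1, Real.exp (N * s^2 / 2))

/-- The modified Couette coefficient `B(N)`. -/
noncomputable def Bcoef (N : ℝ) : ℝ :=
  (1 / N) * (Real.exp (N / 2) - 1) / (∫ s in (0:ℝ)..1, Real.exp (N * s^2 / 2))

section aux

open intervalIntegral Metric Filter

lemma key (c : ℝ → ℝ) (hc : Continuous c) (a b N₀ : ℝ) :
    HasDerivAt (fun N => ∫ t in a..b, Real.exp (N * c t))
      (∫ t in a..b, Real.exp (N₀ * c t) * c t) N₀ := by
  obtain ⟨C, hC⟩ : ∃ C, ∀ t ∈ Set.uIcc a b, ‖c t‖ ≤ C :=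
    isCompact_uIcc.exists_bound_of_continuousOn hc.continuousOn
  have hC0 : 0 ≤ C := le_trans (norm_nonneg _) (hC a Set.left_mem_uIcc)
  set R : ℝ := |N₀| + 1 with hR
  have key := intervalIntegral.hasDerivAt_integral_of_dominated_loc_of_deriv_le
    (F := fun N t => Real.exp (N * c t)) (F' := fun N t => Real.exp (N * c t) * c t)
    (x₀ := N₀) (a := a) (b := b) (μ := volume)
    (bound := fun _ => Real.exp (R * C) * C) (Metric.ball_mem_nhds N₀ one_pos)
    (Filter.Eventually.of_forall fun N =>
      ((Real.continuous_exp.comp (continuous_const.mul hc)).aestronglyMeasurable))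
    ((Real.continuous_exp.comp (continuous_const.mul hc)).intervalIntegrable a b)
    (((Real.continuous_exp.comp (continuous_const.mul hc)).mul hc).aestronglyMeasurable)
    ?_ (intervalIntegrable_const) ?_
  · exact key.2
  · refine Filter.Eventually.of_forall fun t ht N hN => ?_
    have htc : ‖c t‖ ≤ C := hC t (Set.uIoc_subset_uIcc ht)
    have hNR : |N| ≤ R := by
      have := mem_ball_iff_norm.mp hN
      rw [Real.norm_eq_abs] at this
      have h2 : |N| - |N₀| ≤ |N - N₀| := abs_sub_abs_le_abs_sub N N₀
      rw [hR]; linarith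
    have h1 : N * c t ≤ R * C := by
      calc N * c t ≤ |N * c t| := le_abs_self _
        _ = |N| * |c t| := abs_mul _ _
        _ ≤ R * C := by
          apply mul_le_mul hNR (by simpa [Real.norm_eq_abs] using htc) (abs_nonneg _)
          linarith [abs_nonneg N₀]
    rw [norm_mul, Real.norm_eq_abs (Real.exp _), abs_of_pos (Real.exp_pos _)]
    exact mul_le_mul (Real.exp_le_exp.mpr h1) (by simpa using htc) (norm_nonneg _) (Real.exp_pos _).le
  · refine Filter.Eventually.of_forall fun t _ N _ => ?_
    simpa using ((hasDerivAt_id N).mul_const (c t)).exp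

lemma absN {N₀ N : ℝ} (hN : N ∈ ball N₀ 1) : |N| ≤ |N₀| + 1 := by
  have h1 := mem_ball_iff_norm.mp hN
  rw [Real.norm_eq_abs] at h1
  have h2 : |N| - |N₀| ≤ |N - N₀| := abs_sub_abs_le_abs_sub N N₀
  linarith

lemma diff_Q (N₀ : ℝ) : DifferentiableAt ℝ
    (fun N => ∫ s in (0:ℝ)..1, ∫ t in (0:ℝ)..s, Real.exp (N * (s ^ 2 - t ^ 2) / 2)) N₀ := by
  have hc2 : Continuous fun t : ℝ => -(t ^ 2) / 2 := ((continuous_pow 2).neg).div_const 2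
  set P : ℝ → ℝ → ℝ := fun N s => ∫ t in (0:ℝ)..s, Real.exp (N * (-(t ^ 2) / 2)) with hP
  set P' : ℝ → ℝ → ℝ :=
    fun N s => ∫ t in (0:ℝ)..s, Real.exp (N * (-(t ^ 2) / 2)) * (-(t ^ 2) / 2) with hP'
  have hcont : ∀ N : ℝ, Continuous fun t : ℝ => Real.exp (N * (-(t ^ 2) / 2)) :=
    fun N => Real.continuous_exp.comp (continuous_const.mul hc2)
  have hcont' : ∀ N : ℝ, Continuous fun t : ℝ => Real.exp (N * (-(t ^ 2) / 2)) * (-(t ^ 2) / 2) :=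
    fun N => (hcont N).mul hc2
  have hPc : ∀ N, Continuous (P N) := fun N =>
    intervalIntegral.continuous_primitive (fun a b => (hcont N).intervalIntegrable a b) 0
  have hP'c : ∀ N, Continuous (P' N) := fun N =>
    intervalIntegral.continuous_primitive (fun a b => (hcont' N).intervalIntegrable a b) 0
  have hec : ∀ N : ℝ, Continuous fun s : ℝ => Real.exp (N * (s ^ 2 / 2)) :=
    fun N => Real.continuous_exp.comp (continuous_const.mul ((continuous_pow 2).div_const 2))
  have hFs : ∀ N s : ℝ, (∫ t in (0:ℝ)..s, Real.exp (N * (s ^ 2 - t ^ 2) / 2))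
      = Real.exp (N * (s ^ 2 / 2)) * P N s := by
    intro N s
    rw [hP, ← intervalIntegral.integral_const_mul]
    refine intervalIntegral.integral_congr fun t _ => ?_
    rw [← Real.exp_add]; congr 1; ring
  set D : ℝ → ℝ → ℝ := fun N s =>
    Real.exp (N * (s ^ 2 / 2)) * (s ^ 2 / 2) * P N s + Real.exp (N * (s ^ 2 / 2)) * P' N s
    with hD
  have hDc : ∀ N : ℝ, Continuous (D N) := fun N =>
    (((hec N).mul ((continuous_pow 2).div_const 2)).mul (hPc N)).add ((hec N).mul (hP'c N))
  have hFd : ∀ N s : ℝ, HasDerivAt (fun N => Real.exp (N * (s ^ 2 / 2)) * P N s) (D N s) N := by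
    intro N s
    have h1 := (((hasDerivAt_id N).mul_const (s ^ 2 / 2)).exp).mul
      (key (fun t => -(t ^ 2) / 2) hc2 0 s N)
    simpa [hD, hP, hP', mul_comm, mul_assoc, Pi.mul_def] using h1
  set R : ℝ := |N₀| + 1 with hR
  set B : ℝ := Real.exp (R / 2) with hB
  have hB0 : 0 < B := Real.exp_pos _
  have hexpb : ∀ N ∈ ball N₀ 1, ∀ r : ℝ, |r| ≤ 1 → Real.exp (N * (r / 2)) ≤ B := by
    intro N hN r hr
    apply Real.exp_le_exp.mpr
    have h1 : N * (r / 2) ≤ |N| * (|r| / 2) := by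
      calc N * (r / 2) ≤ |N * (r / 2)| := le_abs_self _
        _ = |N| * (|r| / 2) := by rw [abs_mul, abs_div]; norm_num
    have := absN hN
    nlinarith [abs_nonneg r, abs_nonneg N]
  have hPb : ∀ N ∈ ball N₀ 1, ∀ s ∈ Set.Ioc (0:ℝ) 1, |P N s| ≤ B := by
    intro N hN s hs
    have h1 : ∀ t ∈ Set.uIoc (0:ℝ) s, ‖Real.exp (N * (-(t ^ 2) / 2))‖ ≤ B := by
      intro t ht
      rw [Set.uIoc_of_le hs.1.le] at ht
      rw [Real.norm_eq_abs, abs_of_pos (Real.exp_pos _)]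
      exact hexpb N hN _ (by rw [abs_neg, abs_of_nonneg (sq_nonneg t)]; nlinarith [ht.1, ht.2, hs.2])
    calc |P N s| = ‖P N s‖ := rfl
      _ ≤ B * |s - 0| := intervalIntegral.norm_integral_le_of_norm_le_const h1
      _ ≤ B * 1 := by
          apply mul_le_mul_of_nonneg_left _ hB0.le
          rw [sub_zero, abs_of_pos hs.1]; exact hs.2
      _ = B := mul_one B
  have hP'b : ∀ N ∈ ball N₀ 1, ∀ s ∈ Set.Ioc (0:ℝ) 1, |P' N s| ≤ B := by
    intro N hN s hs
    have h1 : ∀ t ∈ Set.uIoc (0:ℝ) s, ‖Real.exp (N * (-(t ^ 2) / 2)) * (-(t ^ 2) / 2)‖ ≤ B := by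
      intro t ht
      rw [Set.uIoc_of_le hs.1.le] at ht
      have ht1 : |(-(t ^ 2) : ℝ)| ≤ 1 := by
        rw [abs_neg, abs_of_nonneg (sq_nonneg t)]; nlinarith [ht.1, ht.2, hs.2]
      rw [norm_mul, Real.norm_eq_abs, Real.norm_eq_abs, abs_of_pos (Real.exp_pos _)]
      have h2 := hexpb N hN _ ht1
      have h3 : |(-(t ^ 2) : ℝ) / 2| ≤ 1 := by rw [abs_div, abs_two]; linarith
      nlinarith [Real.exp_pos (N * (-(t ^ 2) / 2)), abs_nonneg ((-(t ^ 2) : ℝ) / 2)]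
    calc |P' N s| = ‖P' N s‖ := rfl
      _ ≤ B * |s - 0| := intervalIntegral.norm_integral_le_of_norm_le_const h1
      _ ≤ B * 1 := by
          apply mul_le_mul_of_nonneg_left _ hB0.le
          rw [sub_zero, abs_of_pos hs.1]; exact hs.2
      _ = B := mul_one B
  have main := intervalIntegral.hasDerivAt_integral_of_dominated_loc_of_deriv_le
    (F := fun N s => ∫ t in (0:ℝ)..s, Real.exp (N * (s ^ 2 - t ^ 2) / 2))
    (F' := D) (x₀ := N₀) (a := 0) (b := 1) (μ := volume)
    (bound := fun _ => B * B + B * B) (Metric.ball_mem_nhds N₀ one_pos) ?_ ?_ ?_ ?_ intervalIntegrable_const ?_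
  · exact main.2.differentiableAt
  · refine Filter.Eventually.of_forall fun N => ?_
    have h : ((fun N s => ∫ t in (0:ℝ)..s, Real.exp (N * (s ^ 2 - t ^ 2) / 2)) N)
        = fun s => Real.exp (N * (s ^ 2 / 2)) * P N s := funext fun s => hFs N s
    simp only at h; rw [h]
    exact ((hec N).mul (hPc N)).aestronglyMeasurable
  · have h : ((fun N s => ∫ t in (0:ℝ)..s, Real.exp (N * (s ^ 2 - t ^ 2) / 2)) N₀)
        = fun s => Real.exp (N₀ * (s ^ 2 / 2)) * P N₀ s := funext fun s => hFs N₀ s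
    simp only at h; rw [h]
    exact ((hec N₀).mul (hPc N₀)).intervalIntegrable 0 1
  · exact (hDc N₀).aestronglyMeasurable
  · refine Filter.Eventually.of_forall fun s hs N hN => ?_
    rw [Set.uIoc_of_le zero_le_one] at hs
    have hs1 : |s ^ 2| ≤ 1 := by
      rw [abs_of_nonneg (sq_nonneg s)]; nlinarith [hs.1, hs.2]
    have he := hexpb N hN _ hs1
    have h1 := hPb N hN s hs
    have h2 := hP'b N hN s hs
    have hs2 : (0:ℝ) ≤ s ^ 2 / 2 := by positivity
    have hs3 : s ^ 2 / 2 ≤ 1 := by nlinarith [hs.1, hs.2]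
    have e0 := (Real.exp_pos (N * (s ^ 2 / 2))).le
    rw [hD, Real.norm_eq_abs]
    have t1 : Real.exp (N * (s ^ 2 / 2)) * (s ^ 2 / 2) * |P N s| ≤ B * 1 * B := by
      gcongr
    have t2 : Real.exp (N * (s ^ 2 / 2)) * |P' N s| ≤ B * B := by
      gcongr
    calc |Real.exp (N * (s ^ 2 / 2)) * (s ^ 2 / 2) * P N s
          + Real.exp (N * (s ^ 2 / 2)) * P' N s|
        ≤ |Real.exp (N * (s ^ 2 / 2)) * (s ^ 2 / 2) * P N s|
          + |Real.exp (N * (s ^ 2 / 2)) * P' N s| := abs_add_le _ _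
      _ ≤ B * 1 * B + B * B := by
          rw [abs_mul, abs_mul, abs_mul, abs_of_pos (Real.exp_pos _), abs_of_nonneg hs2]
          exact add_le_add t1 t2
      _ = B * B + B * B := by ring
  · refine Filter.Eventually.of_forall fun s hs N hN => ?_
    have h : (fun N => ∫ t in (0:ℝ)..s, Real.exp (N * (s ^ 2 - t ^ 2) / 2))
        = fun N => Real.exp (N * (s ^ 2 / 2)) * P N s := funext fun N => hFs N s
    rw [h]
    exact hFd N s

lemma I1_pos (N : ℝ) : 0 < ∫ s in (0:ℝ)..1, Real.exp (N * s ^ 2 / 2) :=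
  intervalIntegral.intervalIntegral_pos_of_pos_on
    ((Real.continuous_exp.comp (by continuity)).intervalIntegrable 0 1)
    (fun s _ => Real.exp_pos _) one_pos

lemma diff_I1 (N₀ : ℝ) :
    DifferentiableAt ℝ (fun N => ∫ s in (0:ℝ)..1, Real.exp (N * s ^ 2 / 2)) N₀ := by
  have h : (fun N => ∫ s in (0:ℝ)..1, Real.exp (N * s ^ 2 / 2))
      = fun N => ∫ s in (0:ℝ)..1, Real.exp (N * (s ^ 2 / 2)) := by
    funext N; refine intervalIntegral.integral_congr fun s _ => ?_; rw [mul_div_assoc]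
  rw [h]
  exact (key _ (by continuity) 0 1 N₀).differentiableAt

lemma diff_E1 (N₀ : ℝ) :
    DifferentiableAt ℝ (fun N => ∫ t in (0:ℝ)..1, Real.exp (-N * t ^ 2 / 2)) N₀ := by
  have h : (fun N => ∫ t in (0:ℝ)..1, Real.exp (-N * t ^ 2 / 2))
      = fun N => ∫ t in (0:ℝ)..1, Real.exp (N * (-(t ^ 2) / 2)) := by
    funext N; refine intervalIntegral.integral_congr fun t _ => ?_; congr 1; ring
  rw [h]
  exact (key _ (by continuity) 0 1 N₀).differentiableAt

lemma diff_exp_half (N₀ : ℝ) : DifferentiableAt ℝ (fun N : ℝ => Real.exp (N / 2)) N₀ :=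
  (differentiableAt_id.div_const 2).exp

lemma diff_Bcoef {N₀ : ℝ} (h0 : N₀ ≠ 0) : DifferentiableAt ℝ Bcoef N₀ := by
  unfold Bcoef
  exact (((differentiableAt_const 1).div differentiableAt_id h0).mul
    ((diff_exp_half N₀).sub (differentiableAt_const 1))).div (diff_I1 N₀) (I1_pos N₀).ne'

lemma diff_Acoef {N₀ : ℝ} (h0 : N₀ ≠ 0) : DifferentiableAt ℝ Acoef N₀ := by
  unfold Acoef
  have h12 : DifferentiableAt ℝ (fun N : ℝ => 12 / N) N₀ :=
    (differentiableAt_const 12).div differentiableAt_id h0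
  exact (h12.mul (((diff_exp_half N₀).mul (diff_E1 N₀)).sub (differentiableAt_const 1))).sub
    (((h12.mul ((diff_exp_half N₀).sub (differentiableAt_const 1))).mul (diff_Q N₀)).div
      (diff_I1 N₀) (I1_pos N₀).ne')

variable {E : Type*} [NormedAddCommGroup E] [NormedSpace ℝ E] [CompleteSpace E]

lemma solveODE (N : ℝ) (hN : 0 < N) (u : ℝ → E) (hu : ContDiff ℝ 2 u) (c Ub : E)
    (hode : ∀ Z ∈ Set.Ioo (0:ℝ) 1,
      (N * Z) • deriv u Z - deriv (deriv u) Z + c = 0)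
    (hb0 : u 0 = Ub) (hb1 : u 1 = 0) :
    (∫ Z in (0:ℝ)..1, u Z) = Bcoef N • Ub - (Acoef N / 12) • c := by
  have hN0 : N ≠ 0 := hN.ne'
  set φ : ℝ → ℝ := fun Z => Real.exp (N * Z ^ 2 / 2) with hφdef
  set ψ : ℝ → ℝ := fun Z => Real.exp (-N * Z ^ 2 / 2) with hψdef
  have hφc : Continuous φ := Real.continuous_exp.comp (by fun_prop)
  have hψc : Continuous ψ := Real.continuous_exp.comp (by fun_prop)
  have hφψ : ∀ Z, φ Z * ψ Z = 1 := by
    intro Z; rw [hφdef, hψdef, ← Real.exp_add]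
    rw [show N * Z ^ 2 / 2 + -N * Z ^ 2 / 2 = 0 by ring, Real.exp_zero]
  have hφd : ∀ Z, HasDerivAt φ ((N * Z) * φ Z) Z := by
    intro Z
    have h := (((hasDerivAt_pow 2 Z).const_mul N).div_const 2).exp
    convert h using 1
    simp [hφdef]; ring
  have hψd : ∀ Z, HasDerivAt ψ ((-(N * Z)) * ψ Z) Z := by
    intro Z
    have h := (((hasDerivAt_pow 2 Z).const_mul (-N)).div_const 2).exp
    convert h using 1
    simp [hψdef]; ring
  -- regularity of u
  have hu2 : ContDiff ℝ (1 + 1) u := by rwa [one_add_one_eq_two]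
  have hu' : ContDiff ℝ 1 (deriv u) := (contDiff_succ_iff_deriv.mp hu2).2.2
  have hu'c : Continuous (deriv u) := hu'.continuous
  have hu''c : Continuous (deriv (deriv u)) := hu'.continuous_deriv le_rfl
  have hu'd : ∀ Z, HasDerivAt (deriv u) (deriv (deriv u) Z) Z := fun Z =>
    ((hu'.differentiable one_ne_zero) Z).hasDerivAt
  have hud : ∀ Z, HasDerivAt u (deriv u Z) Z := fun Z =>
    ((hu.differentiable (by norm_num)) Z).hasDerivAt
  -- ODE on the closed interval
  have hodeIcc : ∀ Z ∈ Set.Icc (0:ℝ) 1,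
      deriv (deriv u) Z = (N * Z) • deriv u Z + c := by
    have heq : Set.EqOn (fun Z => deriv (deriv u) Z)
        (fun Z => (N * Z) • deriv u Z + c) (Set.Ioo 0 1) := by
      intro Z hZ
      have h := hode Z hZ
      simp only
      rw [eq_comm, ← sub_eq_zero, ← h]; abel
    have hcl := heq.closure hu''c (((continuous_const.mul continuous_id).smul hu'c).add
      continuous_const)
    rw [closure_Ioo (by norm_num : (0:ℝ) ≠ 1)] at hcl
    exact fun Z hZ => hcl hZ
  -- the function v = ψ • u'
  set v : ℝ → E := fun Z => ψ Z • deriv u Z with hvdef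
  have hvd : ∀ Z ∈ Set.Icc (0:ℝ) 1, HasDerivAt v (ψ Z • c) Z := by
    intro Z hZ
    have h := (hψd Z).smul (hu'd Z)
    rw [hodeIcc Z hZ] at h
    convert h using 1
    · rfl
    module
  set P : ℝ → ℝ := fun Z => ∫ t in (0:ℝ)..Z, ψ t with hPdef
  have hPc : Continuous P :=
    intervalIntegral.continuous_primitive (fun a b => hψc.intervalIntegrable a b) 0
  have hPd : ∀ Z, HasDerivAt P (ψ Z) Z := fun Z =>
    (hψc.integral_hasStrictDerivAt 0 Z).hasDerivAt
  set a : E := deriv u 0 with hadef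
  -- v Z = a + P Z • c on [0,1]
  have hv : ∀ Z ∈ Set.Icc (0:ℝ) 1, v Z = a + P Z • c := by
    intro Z hZ
    have hsub : Set.uIcc (0:ℝ) Z ⊆ Set.Icc 0 1 := by
      rw [Set.uIcc_of_le hZ.1]
      exact Set.Icc_subset_Icc le_rfl hZ.2
    have hint : (∫ t in (0:ℝ)..Z, ψ t • c) = v Z - v 0 :=
      intervalIntegral.integral_eq_sub_of_hasDerivAt
        (fun t ht => hvd t (hsub ht))
        ((hψc.smul continuous_const).intervalIntegrable 0 Z)
    rw [intervalIntegral.integral_smul_const] at hint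
    have hv0 : v 0 = a := by
      rw [hvdef, hadef]
      simp only
      norm_num [hψdef]
    rw [hv0] at hint
    rw [hPdef]
    simp only
    rw [hint]; abel
  -- u' Z = φ Z • a + (φ Z * P Z) • c on [0,1]
  have hu'eq : ∀ Z ∈ Set.Icc (0:ℝ) 1,
      deriv u Z = φ Z • a + (φ Z * P Z) • c := by
    intro Z hZ
    have h1 : φ Z • v Z = deriv u Z := by
      rw [hvdef]; simp only [smul_smul, hφψ Z, one_smul]
    rw [← h1, hv Z hZ, smul_add, smul_smul]
  set I1 : ℝ := ∫ s in (0:ℝ)..1, φ s with hI1def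
  have hI1pos : 0 < I1 := I1_pos N
  have hI1ne : I1 ≠ 0 := hI1pos.ne'
  set K : ℝ := ∫ s in (0:ℝ)..1, φ s * P s with hKdef
  -- FTC for u on [0,1]
  have hu10 : u 1 - u 0 = ∫ Z in (0:ℝ)..1, deriv u Z :=
    (intervalIntegral.integral_eq_sub_of_hasDerivAt (fun t _ => hud t)
      (hu'c.intervalIntegrable 0 1)).symm
  have hsplit : (∫ Z in (0:ℝ)..1, deriv u Z) = I1 • a + K • c := by
    have h1 : (∫ Z in (0:ℝ)..1, deriv u Z)
        = ∫ Z in (0:ℝ)..1, (φ Z • a + (φ Z * P Z) • c) := by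
      refine intervalIntegral.integral_congr fun Z hZ => ?_
      rw [Set.uIcc_of_le zero_le_one] at hZ
      exact hu'eq Z hZ
    rw [h1, intervalIntegral.integral_add (f := fun Z => φ Z • a) (g := fun Z => (φ Z * P Z) • c)
      ((hφc.smul continuous_const).intervalIntegrable 0 1)
      (((hφc.mul hPc).smul continuous_const).intervalIntegrable 0 1),
      intervalIntegral.integral_smul_const, intervalIntegral.integral_smul_const]
  have heq1 : I1 • a + K • c = -Ub := by
    rw [← hsplit, ← hu10, hb0, hb1, zero_sub]
  -- integration by parts for ∫ u
  have hibp : (∫ Z in (0:ℝ)..1, u Z) = - ∫ Z in (0:ℝ)..1, Z • deriv u Z := by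
    have hZu : ∀ Z : ℝ, HasDerivAt (fun W => W • u W) (u Z + Z • deriv u Z) Z := by
      intro Z
      have h := (hasDerivAt_id Z).smul (hud Z)
      simp [add_comm] at h; exact h
    have h2 : (∫ Z in (0:ℝ)..1, (u Z + Z • deriv u Z)) = (1:ℝ) • u 1 - (0:ℝ) • u 0 :=
      intervalIntegral.integral_eq_sub_of_hasDerivAt (fun t _ => hZu t)
        ((hu.continuous.add (continuous_id.smul hu'c)).intervalIntegrable 0 1)
    have hii1 : IntervalIntegrable (fun Z : ℝ => Z • deriv u Z) volume 0 1 :=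
      (continuous_id.smul hu'c).intervalIntegrable 0 1
    rw [intervalIntegral.integral_add (hu.continuous.intervalIntegrable 0 1)
      hii1, hb1] at h2
    simp only [smul_zero, zero_smul, sub_zero] at h2
    exact eq_neg_of_add_eq_zero_left h2
  have hsplit2 : (∫ Z in (0:ℝ)..1, Z • deriv u Z)
      = (∫ Z in (0:ℝ)..1, Z * φ Z) • a + (∫ Z in (0:ℝ)..1, Z * φ Z * P Z) • c := by
    have h1 : (∫ Z in (0:ℝ)..1, Z • deriv u Z)
        = ∫ Z in (0:ℝ)..1, ((Z * φ Z) • a + (Z * φ Z * P Z) • c) := by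
      refine intervalIntegral.integral_congr fun Z hZ => ?_
      rw [Set.uIcc_of_le zero_le_one] at hZ
      rw [hu'eq Z hZ]
      module
    have hii2 : IntervalIntegrable (fun Z : ℝ => (Z * φ Z) • a) volume 0 1 :=
      ((continuous_id.mul hφc).smul continuous_const).intervalIntegrable 0 1
    have hii3 : IntervalIntegrable (fun Z : ℝ => (Z * φ Z * P Z) • c) volume 0 1 :=
      (((continuous_id.mul hφc).mul hPc).smul continuous_const).intervalIntegrable 0 1
    rw [h1, intervalIntegral.integral_add hii2 hii3,
      intervalIntegral.integral_smul_const, intervalIntegral.integral_smul_const]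
  -- scalar integral computations
  have hφ1 : φ 1 = Real.exp (N / 2) := by rw [hφdef]; norm_num
  have hφ0 : φ 0 = 1 := by rw [hφdef]; norm_num
  have hP0 : P 0 = 0 := by rw [hPdef]; simp
  have hJ1 : (∫ Z in (0:ℝ)..1, Z * φ Z) = (Real.exp (N / 2) - 1) / N := by
    have hg : ∀ Z : ℝ, HasDerivAt (fun W => φ W / N) (Z * φ Z) Z := by
      intro Z
      have h := (hφd Z).div_const N
      refine h.congr_deriv ?_
      field_simp
    have hii4 : IntervalIntegrable (fun Z : ℝ => Z * φ Z) volume 0 1 :=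
      (continuous_id.mul hφc).intervalIntegrable 0 1
    rw [intervalIntegral.integral_eq_sub_of_hasDerivAt (fun t _ => hg t) hii4, hφ1, hφ0]
    ring
  have hJ2 : (∫ Z in (0:ℝ)..1, Z * φ Z * P Z) = (Real.exp (N / 2) * P 1 - 1) / N := by
    have hg : ∀ Z : ℝ, HasDerivAt (fun W => φ W / N * P W) (Z * φ Z * P Z + 1 / N) Z := by
      intro Z
      have h := ((hφd Z).div_const N).mul (hPd Z)
      have e1 : N * Z * φ Z / N = Z * φ Z := by field_simp
      have e2 : φ Z / N * ψ Z = 1 / N := by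
        rw [div_mul_eq_mul_div, hφψ Z]
      rw [e1, e2] at h
      exact h
    have hii5 : IntervalIntegrable (fun Z : ℝ => Z * φ Z * P Z) volume 0 1 :=
      ((continuous_id.mul hφc).mul hPc).intervalIntegrable 0 1
    have hii6 : IntervalIntegrable (fun Z : ℝ => Z * φ Z * P Z + 1 / N) volume 0 1 :=
      hii5.add (continuous_const.intervalIntegrable 0 1)
    have hF : (∫ Z in (0:ℝ)..1, (Z * φ Z * P Z + 1 / N))
        = φ 1 / N * P 1 - φ 0 / N * P 0 :=
      intervalIntegral.integral_eq_sub_of_hasDerivAt (fun t _ => hg t)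
        hii6
    rw [intervalIntegral.integral_add hii5
      (continuous_const.intervalIntegrable 0 1), intervalIntegral.integral_const,
      hφ1, hφ0, hP0] at hF
    simp only [smul_eq_mul, sub_zero, mul_zero] at hF
    field_simp at hF ⊢
    linarith
  -- identify the double integral with K
  have hQ : (∫ s in (0:ℝ)..1, ∫ t in (0:ℝ)..s, Real.exp (N * (s ^ 2 - t ^ 2) / 2)) = K := by
    rw [hKdef]
    refine intervalIntegral.integral_congr fun s _ => ?_
    rw [hPdef, hφdef]
    simp only
    rw [← intervalIntegral.integral_const_mul]
    refine intervalIntegral.integral_congr fun t _ => ?_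
    rw [← Real.exp_add]; congr 1; ring
  -- solve for a
  have ha : a = I1⁻¹ • (-Ub - K • c) := by
    have h1 : I1 • a = -Ub - K • c := by rw [← heq1]; abel
    rw [← h1, inv_smul_smul₀ hI1ne]
  -- final computation
  rw [hibp, hsplit2, hJ1, hJ2, ha]
  simp only [Bcoef, Acoef]
  rw [hQ, show (∫ s in (0:ℝ)..1, Real.exp (N * s ^ 2 / 2)) = I1 from rfl,
    show (∫ t in (0:ℝ)..1, Real.exp (-N * t ^ 2 / 2)) = P 1 from rfl]
  match_scalars
  · field_simp
  · field_simp
    ring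

end aux

/-- If `u⁰` solves the vertical momentum equation
`N(x) Z ∂_Z u⁰ − ∂²_{ZZ} u⁰ + h₁(x)² ∇_x p⁰ = 0` with `u⁰(x,0) = U_b`, `u⁰(x,1) = 0`,
and `div_x (h₁ ∫₀¹ u⁰ dZ) = 0`, then `p⁰` satisfies the modified Reynolds equation
`div_x((h₁³/12) A(N) ∇_x p⁰) = div_x(h₁ B(N) U_b)` on `ω`. -/
theorem stmt14 {m : ℕ} (ω : Set (EuclideanSpace ℝ (Fin m))) (hω : IsOpen ω)
    (h₁ Nf p0 : EuclideanSpace ℝ (Fin m) → ℝ)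
    (u0 : EuclideanSpace ℝ (Fin m) → ℝ → EuclideanSpace ℝ (Fin m))
    (Ub : EuclideanSpace ℝ (Fin m))
    (hh₁ : ContDiff ℝ 1 h₁) (hh₁pos : ∀ x ∈ ω, 0 < h₁ x)
    (hN : ContDiff ℝ 1 Nf) (hNpos : ∀ x ∈ ω, 0 < Nf x)
    (hp0 : ContDiff ℝ 2 p0)
    (hu0Z : ∀ x ∈ ω, ContDiff ℝ 2 (u0 x))
    (hode : ∀ x ∈ ω, ∀ Z ∈ Set.Ioo (0:ℝ) 1,
      (Nf x * Z) • deriv (u0 x) Z - deriv (deriv (u0 x)) Z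
        + ((h₁ x) ^ 2) • gradient p0 x = 0)
    (hb0 : ∀ x ∈ ω, u0 x 0 = Ub) (hb1 : ∀ x ∈ ω, u0 x 1 = 0)
    (hdiv : ∀ x ∈ ω, ediv (fun y => h₁ y • (∫ Z in (0:ℝ)..1, u0 y Z)) x = 0) :
    ∀ x ∈ ω,
      ediv (fun y => ((h₁ y) ^ 3 / 12 * Acoef (Nf y)) • gradient p0 y) x
        = ediv (fun y => (h₁ y * Bcoef (Nf y)) • Ub) x := by
  intro x hx
  set F := fun y => ((h₁ y) ^ 3 / 12 * Acoef (Nf y)) • gradient p0 y with hFdef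
  set G := fun y => (h₁ y * Bcoef (Nf y)) • Ub with hGdef
  have hNx : (0:ℝ) < Nf x := hNpos x hx
  -- differentiability of the gradient field
  have hgradd : Differentiable ℝ (fun y => gradient p0 y) := by
    have h1 : Differentiable ℝ (fderiv ℝ p0) :=
      (hp0.fderiv_right (m := 1) (by norm_num)).differentiable one_ne_zero
    have h2 : (fun y => gradient p0 y)
        = fun y => (InnerProductSpace.toDual ℝ (EuclideanSpace ℝ (Fin m))).symm
            (fderiv ℝ p0 y) := rfl
    rw [h2]
    exact (InnerProductSpace.toDual ℝ (EuclideanSpace ℝ (Fin m))).symm.differentiable.comp h1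
  have hh₁d : Differentiable ℝ h₁ := hh₁.differentiable one_ne_zero
  have hNd : Differentiable ℝ Nf := hN.differentiable one_ne_zero
  have hAd : DifferentiableAt ℝ (fun y => Acoef (Nf y)) x :=
    (diff_Acoef hNx.ne').comp x (hNd x)
  have hBd : DifferentiableAt ℝ (fun y => Bcoef (Nf y)) x :=
    (diff_Bcoef hNx.ne').comp x (hNd x)
  have hp3 : DifferentiableAt ℝ (fun y => (h₁ y) ^ 3) x := (hh₁d x).pow 3
  have hp312 : DifferentiableAt ℝ (fun y => (h₁ y) ^ 3 / 12) x := by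
    simp only [div_eq_mul_inv]
    exact hp3.mul (differentiableAt_const _)
  have hc1 : DifferentiableAt ℝ (fun y => (h₁ y) ^ 3 / 12 * Acoef (Nf y)) x :=
    hp312.mul hAd
  have hFd : DifferentiableAt ℝ F x := hc1.smul (hgradd x)
  have hGd : DifferentiableAt ℝ G x := (((hh₁d x).mul hBd)).smul_const Ub
  -- pointwise identity on ω
  have hHeq : ∀ y ∈ ω, h₁ y • (∫ Z in (0:ℝ)..1, u0 y Z) = G y - F y := by
    intro y hy
    have hsol := solveODE (Nf y) (hNpos y hy) (u0 y) (hu0Z y hy)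
      (((h₁ y) ^ 2) • gradient p0 y) Ub (hode y hy) (hb0 y hy) (hb1 y hy)
    rw [hsol, hGdef, hFdef]
    simp only
    match_scalars <;> ring
  have hmem : ω ∈ nhds x := hω.mem_nhds hx
  have hev : (fun y => h₁ y • (∫ Z in (0:ℝ)..1, u0 y Z)) =ᶠ[nhds x] fun y => G y - F y :=
    Filter.eventuallyEq_of_mem hmem hHeq
  have hfd : fderiv ℝ (fun y => h₁ y • (∫ Z in (0:ℝ)..1, u0 y Z)) x
      = fderiv ℝ (fun y => G y - F y) x := hev.fderiv_eq
  have hsub : fderiv ℝ (fun y => G y - F y) x = fderiv ℝ G x - fderiv ℝ F x :=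
    fderiv_sub hGd hFd
  have h0 := hdiv x hx
  unfold ediv at h0 ⊢
  rw [hfd, hsub] at h0
  simp only [ContinuousLinearMap.sub_apply, PiLp.sub_apply] at h0
  rw [Finset.sum_sub_distrib] at h0
  linarith
end
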